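/- Any two disjoint compact convex sets in the plane with nonempty interiors have at most four common tangent lines (bitangents). -/

import Mathlib

open Module Set

private noncomputable def mkL (a b : ℝ) : (ℝ × ℝ) →ₗ[ℝ] ℝ :=
  a • LinearMap.fst ℝ ℝ ℝ + b • LinearMap.snd ℝ ℝ ℝ

private lemma mkL_apply (a b : ℝ) (z : ℝ × ℝ) : mkL a b z = a * z.1 + b * z.2 := by
  simp [mkL]

private lemma apply_eq (g : (ℝ × ℝ) →ₗ[ℝ] ℝ) (z : ℝ × ℝ) :
    g z = z.1 * g (1, 0) + z.2 * g (0, 1) := by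
  have hz : z = z.1 • ((1 : ℝ), (0 : ℝ)) + z.2 • ((0 : ℝ), (1 : ℝ)) := by
    ext <;> simp
  have : g z = g (z.1 • ((1 : ℝ), (0 : ℝ)) + z.2 • ((0 : ℝ), (1 : ℝ))) := by rw [← hz]
  rw [this, map_add, map_smul, map_smul, smul_eq_mul, smul_eq_mul]

private lemma ker_rank (g : (ℝ × ℝ) →ₗ[ℝ] ℝ) (hg : g ≠ 0) :
    finrank ℝ (LinearMap.ker g) = 1 := by
  obtain ⟨x, hx⟩ : ∃ x, g x ≠ 0 := by
    by_contra h
    push_neg at h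
    exact hg (LinearMap.ext fun x => by simp [h x])
  have hsurj : Function.Surjective g := by
    intro y
    exact ⟨(y / g x) • x, by rw [map_smul, smul_eq_mul, div_mul_cancel₀ _ hx]⟩
  have h1 := LinearMap.finrank_range_add_finrank_ker g
  rw [LinearMap.range_eq_top.mpr hsurj] at h1
  have h2 : finrank ℝ (ℝ × ℝ) = 2 := by
    simp [Module.finrank_prod]
  have h3 : finrank ℝ (⊤ : Submodule ℝ ℝ) = 1 := by
    simp [finrank_top]
  rw [h2, h3] at h1
  omega

private lemma span_eq_ker (g : (ℝ × ℝ) →ₗ[ℝ] ℝ) (hg : g ≠ 0) {v : ℝ × ℝ} (hv : v ≠ 0)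
    (hgv : g v = 0) : Submodule.span ℝ {v} = LinearMap.ker g := by
  apply Submodule.eq_of_le_of_finrank_eq
  · rw [Submodule.span_le]
    intro z hz
    rcases hz with rfl
    exact hgv
  · rw [finrank_span_singleton hv, ker_rank g hg]

private lemma three_point (g : (ℝ × ℝ) →ₗ[ℝ] ℝ) (hg : g ≠ 0) {d : ℝ} {x y z : ℝ × ℝ}
    (hx : g x = d) (hy : g y = d) (hz : g z = d) (hxy : x ≠ y) :
    ∃ r : ℝ, z = x + r • (y - x) := by
  have h1 : y - x ≠ 0 := sub_ne_zero.2 (Ne.symm hxy)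
  have h2 : g (y - x) = 0 := by rw [map_sub, hx, hy, sub_self]
  have hzx : z - x ∈ LinearMap.ker g := by
    rw [LinearMap.mem_ker, map_sub, hx, hz, sub_self]
  rw [← span_eq_ker g hg h1 h2, Submodule.mem_span_singleton] at hzx
  obtain ⟨r, hr⟩ := hzx
  exact ⟨r, by rw [hr]; abel⟩

private lemma line_repr (L : AffineSubspace ℝ (ℝ × ℝ))
    (hL : finrank ℝ L.direction = 1) (hne : (L : Set (ℝ × ℝ)).Nonempty) :
    ∃ (g : (ℝ × ℝ) →ₗ[ℝ] ℝ) (d : ℝ), g ≠ 0 ∧ (L : Set (ℝ × ℝ)) = {z | g z = d} := by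
  obtain ⟨p, hp⟩ := hne
  have hdirne : L.direction ≠ ⊥ := by
    intro h
    rw [h] at hL
    simp at hL
  obtain ⟨v, hvmem, hv0⟩ := Submodule.exists_mem_ne_zero_of_ne_bot hdirne
  set g : (ℝ × ℝ) →ₗ[ℝ] ℝ := mkL v.2 (-v.1) with hgdef
  have hgv : g v = 0 := by rw [mkL_apply]; ring
  have hg0 : g ≠ 0 := by
    intro h
    apply hv0
    have h1 : g (1, 0) = 0 := by rw [h]; simp
    have h2 : g (0, 1) = 0 := by rw [h]; simp
    rw [mkL_apply] at h1 h2
    simp at h1 h2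
    ext
    · simpa using h2
    · exact h1
  have hspan : Submodule.span ℝ {v} = L.direction := by
    apply Submodule.eq_of_le_of_finrank_eq
    · rw [Submodule.span_le]
      intro z hz
      rcases hz with rfl
      exact hvmem
    · rw [finrank_span_singleton hv0, hL]
  have hdir : L.direction = LinearMap.ker g := by
    rw [← hspan, span_eq_ker g hg0 hv0 hgv]
  refine ⟨g, g p, hg0, ?_⟩
  have hp' : p ∈ L := hp
  ext z
  rw [Set.mem_setOf_eq, AffineSubspace.mem_coe,
    ← AffineSubspace.vsub_right_mem_direction_iff_mem hp' z, hdir, LinearMap.mem_ker]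
  constructor
  · intro h
    have : g (z - p) = 0 := h
    rw [map_sub] at this
    linarith
  · intro h
    show g (z - p) = 0
    rw [map_sub, h, sub_self]

private lemma side_aux (A : Set (ℝ × ℝ)) (hconv : Convex ℝ A)
    (g : (ℝ × ℝ) →ₗ[ℝ] ℝ) (d : ℝ) {z₀ : ℝ × ℝ} (hz₀ : z₀ ∈ interior A)
    (h : ∀ z ∈ interior A, g z < d) : ∀ a ∈ A, g a ≤ d := by
  intro a ha
  by_contra hgt
  push_neg at hgt
  have hz₀d : g z₀ < d := h z₀ hz₀
  set t : ℝ := (g a - d) / (g a - g z₀) with htdef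
  have h1 : 0 < g a - g z₀ := by linarith
  have ht0 : 0 < t := div_pos (by linarith) h1
  have ht1 : t < 1 := (div_lt_one h1).2 (by linarith)
  have hp : (1 - t) • a + t • z₀ ∈ interior A := by
    apply hconv.combo_closure_interior_mem_interior (subset_closure ha) hz₀ (by linarith) ht0
    ring
  have h2 := h _ hp
  have h3 : g ((1 - t) • a + t • z₀) = (1 - t) * g a + t * g z₀ := by
    rw [map_add, map_smul, map_smul, smul_eq_mul, smul_eq_mul]
  rw [h3] at h2
  have h4 : t * (g a - g z₀) = g a - d := by
    rw [htdef]; field_simp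
  nlinarith

private lemma side_of_tangent (A : Set (ℝ × ℝ)) (hconv : Convex ℝ A)
    (hint : (interior A).Nonempty) (g : (ℝ × ℝ) →ₗ[ℝ] ℝ) (d : ℝ)
    (hdisj : {z : ℝ × ℝ | g z = d} ∩ interior A = ∅) :
    (∀ a ∈ A, g a ≤ d) ∨ (∀ a ∈ A, d ≤ g a) := by
  have hcont : Continuous g := g.continuous_of_finiteDimensional
  set U := {z : ℝ × ℝ | g z < d} with hU
  set V := {z : ℝ × ℝ | d < g z} with hV
  have hUo : IsOpen U := isOpen_lt hcont continuous_const
  have hVo : IsOpen V := isOpen_lt continuous_const hcont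
  have hdisjUV : Disjoint U V := by
    rw [Set.disjoint_left]
    intro z h1 h2
    rw [hU, Set.mem_setOf_eq] at h1
    rw [hV, Set.mem_setOf_eq] at h2
    linarith
  have hsub : interior A ⊆ U ∪ V := by
    intro z hz
    rcases lt_trichotomy (g z) d with h | h | h
    · exact Or.inl h
    · exfalso
      have hmem : z ∈ {z : ℝ × ℝ | g z = d} ∩ interior A := ⟨h, hz⟩
      rw [hdisj] at hmem
      exact hmem
    · exact Or.inr h
  obtain ⟨z₀, hz₀⟩ := hint
  rcases (hconv.interior.isPreconnected).subset_or_subset hUo hVo hdisjUV hsub with h | h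
  · exact Or.inl (side_aux A hconv g d hz₀ fun z hz => h hz)
  · right
    have := side_aux A hconv (-g) (-d) hz₀ (fun z hz => by
      have := h hz
      rw [hV, Set.mem_setOf_eq] at this
      simp only [LinearMap.neg_apply]
      linarith)
    intro a ha
    have h2 := this a ha
    simp only [LinearMap.neg_apply] at h2
    linarith
private def coreSet (A B : Set (ℝ × ℝ)) : Set (AffineSubspace ℝ (ℝ × ℝ)) :=
  {L | Module.finrank ℝ L.direction = 1 ∧ ((L : Set (ℝ × ℝ)) ∩ A).Nonempty ∧
    ((L : Set (ℝ × ℝ)) ∩ B).Nonempty ∧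
    ∃ (g : (ℝ × ℝ) →ₗ[ℝ] ℝ) (d : ℝ), g ≠ 0 ∧ (L : Set (ℝ × ℝ)) = {z | g z = d} ∧
      ∀ z ∈ A ∪ B, g z ≤ d}

set_option maxHeartbeats 2000000 in
private lemma core (A B : Set (ℝ × ℝ)) (hAc : IsCompact A) (hBc : IsCompact B)
    (f : (ℝ × ℝ) →ₗ[ℝ] ℝ) (c : ℝ) (hA : ∀ a ∈ A, f a < c) (hB : ∀ b ∈ B, c < f b) :
    (coreSet A B).Finite ∧ (coreSet A B).ncard ≤ 2 := by
  set S := coreSet A B with hSdef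
  rcases S.eq_empty_or_nonempty with hS | ⟨L₀, hL₀⟩
  · rw [hS]; exact ⟨Set.finite_empty, by simp⟩
  have hex : ∀ L : AffineSubspace ℝ (ℝ × ℝ), ∃ q : ℝ × ℝ,
      L ∈ S → q ∈ (L : Set (ℝ × ℝ)) ∧ f q = c ∧
        ∃ a b : ℝ × ℝ, ∃ t : ℝ, a ∈ A ∧ b ∈ B ∧ a ∈ (L : Set (ℝ × ℝ)) ∧
          b ∈ (L : Set (ℝ × ℝ)) ∧ 0 < t ∧ t < 1 ∧ q = a + t • (b - a) := by
    intro L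
    by_cases hL : L ∈ S
    · obtain ⟨h1, ⟨a, haL, haA⟩, ⟨b, hbL, hbB⟩, g, d, hg0, hrepr, hside⟩ := hL
      have hfa : f a < c := hA a haA
      have hfb : c < f b := hB b hbB
      have hden : 0 < f b - f a := by linarith
      set t : ℝ := (c - f a) / (f b - f a) with htdef
      refine ⟨a + t • (b - a), fun _ => ?_⟩
      have ht0 : 0 < t := div_pos (by linarith) hden
      have ht1 : t < 1 := (div_lt_one hden).2 (by linarith)
      have hga : g a = d := by rw [hrepr] at haL; exact haL
      have hgb : g b = d := by rw [hrepr] at hbL; exact hbL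
      refine ⟨?_, ?_, a, b, t, haA, hbB, haL, hbL, ht0, ht1, rfl⟩
      · rw [hrepr]
        show g (a + t • (b - a)) = d
        rw [map_add, map_smul, map_sub, smul_eq_mul, hga, hgb]
        ring
      · rw [map_add, map_smul, map_sub, smul_eq_mul, htdef,
          div_mul_cancel₀ _ hden.ne']
        ring
    · exact ⟨0, fun h => absurd h hL⟩
  choose q hq using hex
  set μ : (ℝ × ℝ) × (ℝ × ℝ) × ℝ → ℝ × ℝ := fun p => p.1 + p.2.2 • (p.2.1 - p.1) with hμ
  have hμc : Continuous μ := by fun_prop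
  have hfc : Continuous f := f.continuous_of_finiteDimensional
  set J : Set (ℝ × ℝ) := (μ '' (A ×ˢ B ×ˢ Set.Icc (0:ℝ) 1)) ∩ {z | f z = c} with hJdef
  have hJc : IsCompact J :=
    ((hAc.prod (hBc.prod isCompact_Icc)).image hμc).inter_right
      (isClosed_eq hfc continuous_const)
  have hqJ : ∀ L ∈ S, q L ∈ J := by
    intro L hL
    obtain ⟨hqL, hfq, a, b, t, haA, hbB, _, _, ht0, ht1, hqe⟩ := hq L hL
    exact ⟨⟨(a, b, t), ⟨haA, hbB, ht0.le, ht1.le⟩, hqe.symm⟩, hfq⟩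
  obtain ⟨_, ⟨a₀, ha₀L, ha₀A⟩, ⟨b₀, hb₀L, hb₀B⟩, -⟩ := id hL₀
  set α : ℝ := f (1, 0) with hα
  set β : ℝ := f (0, 1) with hβ
  have hαβ : α ^ 2 + β ^ 2 ≠ 0 := by
    intro h
    have h1 : α = 0 := by nlinarith [sq_nonneg α, sq_nonneg β]
    have h2 : β = 0 := by nlinarith [sq_nonneg α, sq_nonneg β]
    have hz : ∀ z : ℝ × ℝ, f z = 0 := by
      intro z
      rw [apply_eq f z, ← hα, ← hβ, h1, h2]; ring
    have ha := hA a₀ ha₀A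
    have hb := hB b₀ hb₀B
    rw [hz a₀] at ha
    rw [hz b₀] at hb
    linarith
  set φ : (ℝ × ℝ) →ₗ[ℝ] ℝ := mkL β (-α) with hφdef
  have hφc : Continuous φ := φ.continuous_of_finiteDimensional
  have hpair : ∀ z w : ℝ × ℝ, f z = f w → φ z = φ w → z = w := by
    intro z w h1 h2
    rw [apply_eq f z, apply_eq f w, ← hα, ← hβ] at h1
    rw [hφdef, mkL_apply, mkL_apply] at h2
    have e1 : (α ^ 2 + β ^ 2) * (z.1 - w.1) = 0 := by linear_combination α * h1 + β * h2
    have e2 : (α ^ 2 + β ^ 2) * (z.2 - w.2) = 0 := by linear_combination β * h1 - α * h2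
    have z1 : z.1 = w.1 := by
      rcases mul_eq_zero.1 e1 with h | h
      · exact absurd h hαβ
      · linarith
    have z2 : z.2 = w.2 := by
      rcases mul_eq_zero.1 e2 with h | h
      · exact absurd h hαβ
      · linarith
    exact Prod.ext z1 z2
  have hJne : J.Nonempty := ⟨q L₀, hqJ L₀ hL₀⟩
  obtain ⟨x, hxJ, hxmin⟩ := hJc.exists_isMinOn hJne hφc.continuousOn
  obtain ⟨y, hyJ, hymax⟩ := hJc.exists_isMaxOn hJne hφc.continuousOn
  have hfx : f x = c := hxJ.2
  have hfy : f y = c := hyJ.2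
  have hgJ : ∀ (g : (ℝ × ℝ) →ₗ[ℝ] ℝ) (d : ℝ), (∀ z ∈ A ∪ B, g z ≤ d) →
      ∀ z ∈ J, g z ≤ d := by
    intro g d hside z hz
    obtain ⟨⟨⟨a, b, t⟩, ⟨haA, hbB, ht0, ht1⟩, hze⟩, -⟩ := hz
    have hga : g a ≤ d := hside a (Or.inl haA)
    have hgb : g b ≤ d := hside b (Or.inr hbB)
    have hze' : z = a + t • (b - a) := hze.symm
    rw [hze', map_add, map_smul, map_sub, smul_eq_mul]
    nlinarith
  have claimA : ∀ L ∈ S, q L = x ∨ q L = y := by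
    intro L hL
    obtain ⟨hqL, hfq, a, b, t, haA, hbB, haL, hbL, ht0, ht1, hqe⟩ := hq L hL
    have hqJ' := hqJ L hL
    have hx1 : φ x ≤ φ (q L) := isMinOn_iff.1 hxmin _ hqJ'
    have hy1 : φ (q L) ≤ φ y := isMaxOn_iff.1 hymax _ hqJ'
    by_cases hex1 : φ (q L) = φ x
    · exact Or.inl (hpair _ _ (by rw [hfq, hfx]) hex1)
    by_cases hey : φ (q L) = φ y
    · exact Or.inr (hpair _ _ (by rw [hfq, hfy]) hey)
    exfalso
    have hx2 : φ x < φ (q L) := lt_of_le_of_ne hx1 (Ne.symm hex1)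
    have hy2 : φ (q L) < φ y := lt_of_le_of_ne hy1 hey
    have hxyφ : φ x < φ y := lt_trans hx2 hy2
    set s : ℝ := (φ (q L) - φ x) / (φ y - φ x) with hsdef
    have hden : 0 < φ y - φ x := by linarith
    have hs0 : 0 < s := div_pos (by linarith) hden
    have hs1 : s < 1 := (div_lt_one hden).2 (by linarith)
    have hf2 : f (x + s • (y - x)) = c := by
      rw [map_add, map_smul, map_sub, smul_eq_mul, hfx, hfy]; ring
    have hφ2 : φ (x + s • (y - x)) = φ (q L) := by
      rw [map_add, map_smul, map_sub, smul_eq_mul, hsdef,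
        div_mul_cancel₀ _ hden.ne']
      ring
    have hqxy : q L = x + s • (y - x) := hpair _ _ (by rw [hfq, hf2]) hφ2.symm
    obtain ⟨-, -, -, g, d, hg0, hrepr, hside⟩ := id hL
    have hgx : g x ≤ d := hgJ g d hside x hxJ
    have hgy : g y ≤ d := hgJ g d hside y hyJ
    have hgq : g (q L) = d := by rw [hrepr] at hqL; exact hqL
    rw [hqxy, map_add, map_smul, map_sub, smul_eq_mul] at hgq
    have h1s : 0 < 1 - s := by linarith
    have hgx' : g x = d := le_antisymm hgx (by nlinarith)
    have hgy' : g y = d := le_antisymm hgy (by nlinarith)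
    have hxyne : x ≠ y := fun h => by rw [h] at hxyφ; exact lt_irrefl _ hxyφ
    have hga : g a = d := by rw [hrepr] at haL; exact haL
    obtain ⟨r, hr⟩ := three_point g hg0 hgx' hgy' hga hxyne
    have hfa2 : f a = c := by
      rw [hr, map_add, map_smul, map_sub, smul_eq_mul, hfx, hfy]; ring
    have := hA a haA
    linarith
  have claimB : Set.InjOn q S := by
    intro L₁ hL₁ L₂ hL₂ hq12
    obtain ⟨hqL₁, hfq₁, a₁, b₁, t₁, ha₁A, hb₁B, ha₁L, hb₁L, ht₁0, ht₁1, hq₁e⟩ := hq L₁ hL₁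
    have hqL₂ := (hq L₂ hL₂).1
    obtain ⟨-, -, -, g₁, d₁, hg₁0, hrepr₁, hside₁⟩ := id hL₁
    obtain ⟨-, -, -, g₂, d₂, hg₂0, hrepr₂, hside₂⟩ := id hL₂
    have hq2 : q L₁ ∈ (L₂ : Set (ℝ × ℝ)) := hq12 ▸ hqL₂
    have hg₂q : g₂ (q L₁) = d₂ := by rw [hrepr₂] at hq2; exact hq2
    have hg₂a : g₂ a₁ ≤ d₂ := hside₂ a₁ (Or.inl ha₁A)
    have hg₂b : g₂ b₁ ≤ d₂ := hside₂ b₁ (Or.inr hb₁B)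
    rw [hq₁e, map_add, map_smul, map_sub, smul_eq_mul] at hg₂q
    have h1t : 0 < 1 - t₁ := by linarith
    have hga2 : g₂ a₁ = d₂ := le_antisymm hg₂a (by nlinarith)
    have hgb2 : g₂ b₁ = d₂ := le_antisymm hg₂b (by nlinarith)
    have hab : a₁ ≠ b₁ := by
      intro h
      have h1 := hA a₁ ha₁A
      have h2 := hB b₁ hb₁B
      rw [h] at h1; linarith
    have hga1 : g₁ a₁ = d₁ := by rw [hrepr₁] at ha₁L; exact ha₁L
    have hgb1 : g₁ b₁ = d₁ := by rw [hrepr₁] at hb₁L; exact hb₁L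
    apply AffineSubspace.coe_injective
    rw [hrepr₁, hrepr₂]
    ext z
    simp only [Set.mem_setOf_eq]
    constructor
    · intro hz
      obtain ⟨r, hr⟩ := three_point g₁ hg₁0 hga1 hgb1 hz hab
      rw [hr, map_add, map_smul, map_sub, smul_eq_mul, hga2, hgb2]; ring
    · intro hz
      obtain ⟨r, hr⟩ := three_point g₂ hg₂0 hga2 hgb2 hz hab
      rw [hr, map_add, map_smul, map_sub, smul_eq_mul, hga1, hgb1]; ring
  have hmaps : ∀ L ∈ S, q L ∈ ({x, y} : Set (ℝ × ℝ)) := by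
    intro L hL
    rcases claimA L hL with h | h
    · rw [h]; exact Set.mem_insert x {y}
    · rw [h]; exact Set.mem_insert_of_mem x rfl
  have hfin2 : ({x, y} : Set (ℝ × ℝ)).Finite := (Set.finite_singleton y).insert x
  constructor
  · apply Set.Finite.of_finite_image (hfin2.subset ?_) claimB
    rintro z ⟨L, hL, rfl⟩
    exact hmaps L hL
  · calc S.ncard ≤ ({x, y} : Set (ℝ × ℝ)).ncard :=
        Set.ncard_le_ncard_of_injOn q hmaps claimB hfin2
      _ ≤ 2 := by
        apply (Set.ncard_insert_le x {y}).trans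
        simp
set_option maxHeartbeats 2000000 in
/-- two disjoint compact convex planar sets with nonempty interior
have at most four common tangent lines (bitangents). A line is modeled as a
one-dimensional affine subspace; it is tangent to a set if it meets the set
but not its interior. -/
theorem stmt_2 (A B : Set (ℝ × ℝ))
    (hAcomp : IsCompact A) (hBcomp : IsCompact B)
    (hAconv : Convex ℝ A) (hBconv : Convex ℝ B)
    (hAint : (interior A).Nonempty) (hBint : (interior B).Nonempty)
    (hdisj : Disjoint A B) :
    {L : AffineSubspace ℝ (ℝ × ℝ) |
        Module.finrank ℝ L.direction = 1 ∧
        ((L : Set (ℝ × ℝ)) ∩ A).Nonempty ∧ (L : Set (ℝ × ℝ)) ∩ interior A = ∅ ∧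
        ((L : Set (ℝ × ℝ)) ∩ B).Nonempty ∧
        (L : Set (ℝ × ℝ)) ∩ interior B = ∅}.ncard ≤ 4 := by
  classical
  set S := {L : AffineSubspace ℝ (ℝ × ℝ) |
        Module.finrank ℝ L.direction = 1 ∧
        ((L : Set (ℝ × ℝ)) ∩ A).Nonempty ∧ (L : Set (ℝ × ℝ)) ∩ interior A = ∅ ∧
        ((L : Set (ℝ × ℝ)) ∩ B).Nonempty ∧
        (L : Set (ℝ × ℝ)) ∩ interior B = ∅} with hSdef
  obtain ⟨zA, hzA⟩ := id hAint
  obtain ⟨zB, hzB⟩ := id hBint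
  have hAne : A.Nonempty := ⟨zA, interior_subset hzA⟩
  have hBne : B.Nonempty := ⟨zB, interior_subset hzB⟩
  obtain ⟨f₀, u, v, hfa, huv, hfb⟩ :=
    geometric_hahn_banach_compact_closed hAconv hAcomp hBconv hBcomp.isClosed hdisj
  set f : (ℝ × ℝ) →ₗ[ℝ] ℝ := f₀.toLinearMap with hfdef
  set c : ℝ := (u + v) / 2 with hcdef
  have hA' : ∀ a ∈ A, f a < c := by
    intro a ha
    have := hfa a ha
    show f₀ a < c
    linarith
  have hB' : ∀ b ∈ B, c < f b := by
    intro b hb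
    have := hfb b hb
    show c < f₀ b
    linarith
  have hE := core A B hAcomp hBcomp f c hA' hB'
  set E := coreSet A B with hEdef
  -- the difference body
  set K : Set (ℝ × ℝ) := (fun p : (ℝ × ℝ) × (ℝ × ℝ) => p.1 - p.2) '' (A ×ˢ B) with hKdef
  have hKc : IsCompact K := (hAcomp.prod hBcomp).image (by fun_prop)
  have hKne : K.Nonempty := ⟨zA - zB, ⟨(zA, zB), ⟨interior_subset hzA, interior_subset hzB⟩, rfl⟩⟩
  have hfc : Continuous f := f.continuous_of_finiteDimensional
  obtain ⟨k₀, hk₀K, hk₀max⟩ := hKc.exists_isMaxOn hKne hfc.continuousOn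
  have hk₀neg : f k₀ < 0 := by
    obtain ⟨⟨a, b⟩, ⟨haA, hbB⟩, rfl⟩ := hk₀K
    have h1 := hA' a haA
    have h2 := hB' b hbB
    have : f (a - b) = f a - f b := map_sub f a b
    rw [this]
    linarith
  have hKlt : ∀ k ∈ K, f k < f k₀ / 2 := by
    intro k hk
    have := isMaxOn_iff.1 hk₀max k hk
    linarith
  have h0gt : ∀ z ∈ ({0} : Set (ℝ × ℝ)), f k₀ / 2 < f z := by
    intro z hz
    rcases hz with rfl
    rw [map_zero]
    linarith
  have hT := core K {0} hKc isCompact_singleton f (f k₀ / 2) hKlt h0gt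
  set T := coreSet K ({0} : Set (ℝ × ℝ)) with hTdef
  -- oriented representations for lines in S \ E
  have hdata : ∀ L : AffineSubspace ℝ (ℝ × ℝ), ∃ (g : (ℝ × ℝ) →ₗ[ℝ] ℝ) (d : ℝ),
      L ∈ S \ E → (g ≠ 0 ∧ (L : Set (ℝ × ℝ)) = {z | g z = d} ∧ (∀ a ∈ A, g a ≤ d) ∧
        (∀ b ∈ B, d ≤ g b)) := by
    intro L
    by_cases hL : L ∈ S \ E
    · obtain ⟨⟨hrank, hAmeet, hAtan, hBmeet, hBtan⟩, hnotE⟩ := hL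
      obtain ⟨a, haL, haA⟩ := hAmeet
      obtain ⟨g0, d0, hg00, hrepr0⟩ := line_repr L hrank ⟨a, haL⟩
      have hsA := side_of_tangent A hAconv hAint g0 d0 (by rw [← hrepr0]; exact hAtan)
      obtain ⟨g, d, hg0, hrepr, hsideA⟩ :
          ∃ (g : (ℝ × ℝ) →ₗ[ℝ] ℝ) (d : ℝ), g ≠ 0 ∧ (L : Set (ℝ × ℝ)) = {z | g z = d} ∧
            ∀ a ∈ A, g a ≤ d := by
        rcases hsA with h | h
        · exact ⟨g0, d0, hg00, hrepr0, h⟩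
        · refine ⟨-g0, -d0, neg_ne_zero.2 hg00, ?_, fun a ha => ?_⟩
          · rw [hrepr0]
            ext z
            simp only [Set.mem_setOf_eq, LinearMap.neg_apply]
            constructor
            · intro h'; linarith
            · intro h'; linarith
          · simp only [LinearMap.neg_apply]
            have := h a ha
            linarith
      have hsB := side_of_tangent B hBconv hBint g d (by rw [← hrepr]; exact hBtan)
      rcases hsB with h | h
      · exfalso
        apply hnotE
        refine ⟨hrank, ⟨a, haL, haA⟩, hBmeet, g, d, hg0, hrepr, ?_⟩
        rintro z (hz | hz)
        · exact hsideA z hz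
        · exact h z hz
      · exact ⟨g, d, fun _ => ⟨hg0, hrepr, hsideA, h⟩⟩
    · exact ⟨0, 0, fun h => absurd h hL⟩
  choose gs ds hgs using hdata
  set Ψ : AffineSubspace ℝ (ℝ × ℝ) → AffineSubspace ℝ (ℝ × ℝ) :=
    fun L => (LinearMap.ker (gs L)).toAffineSubspace with hΨdef
  have hmaps : ∀ L ∈ S \ E, Ψ L ∈ T := by
    intro L hL
    obtain ⟨hg0, hrepr, hsideA, hsideB⟩ := hgs L hL
    obtain ⟨⟨hrank, hAmeet, hAtan, hBmeet, hBtan⟩, -⟩ := hL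
    obtain ⟨a, haL, haA⟩ := hAmeet
    obtain ⟨b, hbL, hbB⟩ := hBmeet
    have hga : gs L a = ds L := by rw [hrepr] at haL; exact haL
    have hgb : gs L b = ds L := by rw [hrepr] at hbL; exact hbL
    refine ⟨?_, ?_, ?_, gs L, 0, hg0, ?_, ?_⟩
    · show Module.finrank ℝ ((LinearMap.ker (gs L)).toAffineSubspace).direction = 1
      rw [Submodule.toAffineSubspace_direction]
      exact ker_rank _ hg0
    · refine ⟨a - b, ?_, ⟨(a, b), ⟨haA, hbB⟩, rfl⟩⟩
      show a - b ∈ (LinearMap.ker (gs L)).toAffineSubspace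
      rw [Submodule.mem_toAffineSubspace, LinearMap.mem_ker, map_sub, hga, hgb, sub_self]
    · refine ⟨0, ?_, rfl⟩
      show (0 : ℝ × ℝ) ∈ (LinearMap.ker (gs L)).toAffineSubspace
      rw [Submodule.mem_toAffineSubspace]
      exact Submodule.zero_mem _
    · ext z
      show z ∈ (LinearMap.ker (gs L)).toAffineSubspace ↔ _
      rw [Submodule.mem_toAffineSubspace, LinearMap.mem_ker]
      rfl
    · rintro z (hz | hz)
      · obtain ⟨⟨p, q⟩, ⟨hp, hq⟩, rfl⟩ := hz
        have h1 := hsideA p hp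
        have h2 := hsideB q hq
        rw [map_sub]
        linarith
      · rcases hz with rfl
        rw [map_zero]
  have hinj : Set.InjOn Ψ (S \ E) := by
    intro L₁ hL₁ L₂ hL₂ heq
    obtain ⟨hg₁0, hrepr₁, hsideA₁, hsideB₁⟩ := hgs L₁ hL₁
    obtain ⟨hg₂0, hrepr₂, hsideA₂, hsideB₂⟩ := hgs L₂ hL₂
    have hker : LinearMap.ker (gs L₁) = LinearMap.ker (gs L₂) := by
      have h1 := congrArg AffineSubspace.direction heq
      simpa only [hΨdef, Submodule.toAffineSubspace_direction] using h1
    obtain ⟨w, hw⟩ : ∃ w, gs L₁ w ≠ 0 := by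
      by_contra h
      push_neg at h
      exact hg₁0 (LinearMap.ext fun z => by simp [h z])
    set lam : ℝ := gs L₂ w / gs L₁ w with hlamdef
    have hprop : ∀ z, gs L₂ z = lam * gs L₁ z := by
      intro z
      have h1 : z - (gs L₁ z / gs L₁ w) • w ∈ LinearMap.ker (gs L₁) := by
        rw [LinearMap.mem_ker, map_sub, map_smul, smul_eq_mul,
          div_mul_cancel₀ _ hw, sub_self]
      rw [hker, LinearMap.mem_ker, map_sub, map_smul, smul_eq_mul] at h1
      have h2 : gs L₂ z = gs L₁ z / gs L₁ w * gs L₂ w := by linarith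
      rw [h2, hlamdef]
      ring
    have hlam0 : lam ≠ 0 := by
      intro h
      apply hg₂0
      apply LinearMap.ext
      intro z
      rw [hprop z, h]
      simp
    obtain ⟨⟨-, hAmeet₁, -, hBmeet₁, -⟩, -⟩ := hL₁
    obtain ⟨⟨-, hAmeet₂, -, hBmeet₂, -⟩, -⟩ := hL₂
    obtain ⟨a₁, ha₁L, ha₁A⟩ := hAmeet₁
    obtain ⟨b₁, hb₁L, hb₁B⟩ := hBmeet₁
    obtain ⟨a₂, ha₂L, ha₂A⟩ := hAmeet₂
    have e4 : gs L₁ a₁ = ds L₁ := by rw [hrepr₁] at ha₁L; exact ha₁L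
    rcases lt_trichotomy lam 0 with hneg | h0 | hpos
    · exfalso
      have hA2 : ∀ a ∈ A, lam * gs L₁ a ≤ ds L₂ := fun a ha => by
        rw [← hprop a]; exact hsideA₂ a ha
      have hB2 : ∀ b ∈ B, ds L₂ ≤ lam * gs L₁ b := fun b hb => by
        rw [← hprop b]; exact hsideB₂ b hb
      have hnhds : A ∈ nhds zA := mem_interior_iff_mem_nhds.1 hzA
      obtain ⟨ε, hε, hball⟩ := Metric.mem_nhds_iff.1 hnhds
      have hwne : w ≠ 0 := fun h => hw (by rw [h, map_zero])
      have hnw : 0 < ‖w‖ := norm_pos_iff.2 hwne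
      set tt : ℝ := ε / (2 * ‖w‖) with httdef
      have htt0 : 0 < tt := div_pos hε (by positivity)
      have hplus : zA + tt • w ∈ A := by
        apply hball
        rw [Metric.mem_ball, dist_eq_norm]
        have : zA + tt • w - zA = tt • w := by abel
        rw [this, norm_smul, Real.norm_eq_abs, abs_of_pos htt0]
        have he : tt * ‖w‖ = ε / 2 := by
          rw [httdef]
          field_simp
        rw [he]
        linarith
      have hminus : zA - tt • w ∈ A := by
        apply hball
        rw [Metric.mem_ball, dist_eq_norm]
        have : zA - tt • w - zA = -(tt • w) := by abel
        rw [this, norm_neg, norm_smul, Real.norm_eq_abs, abs_of_pos htt0]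
        have he : tt * ‖w‖ = ε / 2 := by
          rw [httdef]
          field_simp
        rw [he]
        linarith
      have i1 : gs L₁ zA + tt * gs L₁ w ≤ ds L₁ := by
        have := hsideA₁ _ hplus
        rwa [map_add, map_smul, smul_eq_mul] at this
      have i2 : gs L₁ zA - tt * gs L₁ w ≤ ds L₁ := by
        have := hsideA₁ _ hminus
        rwa [map_sub, map_smul, smul_eq_mul] at this
      have i3 : lam * (gs L₁ zA + tt * gs L₁ w) ≤ ds L₂ := by
        have := hA2 _ hplus
        rwa [map_add, map_smul, smul_eq_mul] at this
      have i4 : lam * (gs L₁ zA - tt * gs L₁ w) ≤ ds L₂ := by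
        have := hA2 _ hminus
        rwa [map_sub, map_smul, smul_eq_mul] at this
      have j1 : ds L₁ ≤ gs L₁ b₁ := hsideB₁ b₁ hb₁B
      have j2 : ds L₂ ≤ lam * gs L₁ b₁ := hB2 b₁ hb₁B
      have h5 : lam * gs L₁ zA ≤ lam * gs L₁ b₁ := by nlinarith
      have h6 : gs L₁ b₁ ≤ gs L₁ zA := by nlinarith
      have hWne : tt * gs L₁ w ≠ 0 := mul_ne_zero htt0.ne' hw
      have h7 : tt * gs L₁ w ≤ 0 := by linarith
      have h8 : 0 ≤ tt * gs L₁ w := by linarith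
      exact hWne (le_antisymm h7 h8)
    · exact absurd h0 hlam0
    · have e1 : gs L₂ a₂ = ds L₂ := by rw [hrepr₂] at ha₂L; exact ha₂L
      have e2 : gs L₁ a₂ ≤ ds L₁ := hsideA₁ a₂ ha₂A
      have e3 : gs L₂ a₁ ≤ ds L₂ := hsideA₂ a₁ ha₁A
      rw [hprop a₂] at e1
      rw [hprop a₁, e4] at e3
      have hd : ds L₂ = lam * ds L₁ := by nlinarith
      apply AffineSubspace.coe_injective
      rw [hrepr₁, hrepr₂]
      ext z
      simp only [Set.mem_setOf_eq]
      constructor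
      · intro hz
        rw [hprop z, hz, hd]
      · intro hz
        rw [hprop z, hd] at hz
        exact mul_left_cancel₀ hlam0 hz
  have h1 : (S ∩ E).ncard ≤ 2 :=
    le_trans (Set.ncard_le_ncard Set.inter_subset_right hE.1) hE.2
  have h2 : (S \ E).ncard ≤ 2 :=
    le_trans (Set.ncard_le_ncard_of_injOn Ψ hmaps hinj hT.1) hT.2
  calc S.ncard = ((S ∩ E) ∪ (S \ E)).ncard := by rw [Set.inter_union_diff]
    _ ≤ (S ∩ E).ncard + (S \ E).ncard := Set.ncard_union_le _ _
    _ ≤ 4 := by omega
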